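/- Lyapunov inequality for master–slave Lorenz synchronization under the cancellation control (Section 5.2, control (lo:eq4)). Let σ > 0, β > 0, ρ > 0 and 0 < λ < 1. Let x₁, y₁, z₁, x₂, y₂, z₂, d₁, d₂, d₃ : ℝ → ℝ with x₁,y₁,z₁,x₂,y₂,z₂ differentiable, satisfying the master Lorenz system x₁′ = σ(y₁ − x₁) + d₁, y₁′ = x₁(ρ − z₁) − y₁ + d₂, z₁′ = x₁y₁ − βz₁ + d₃, and the slave system x₂′ = σ(y₂ − x₂), y₂′ = x₂(ρ − z₂) − y₂ + u₁, z₂′ = x₂y₂ − βz₂ + u₂, with controls u₁ = (ρ + σ − 2√((1−λ)σ) − z₂)·e₁ and u₂ = y₂·e₁, where e₁ = x₁ − x₂, e₂ = y₁ − y₂, e₃ = z₁ − z₂. Then V(t) := ½(e₁(t)² + e₂(t)² + e₃(t)²) is differentiable and, for all t, V′(t) ≤ −λσ·e₁(t)² − (√((1−λ)σ)·e₁(t) − e₂(t))² − β·e₃(t)² + e₁(t)d₁(t) + e₂(t)d₂(t) + e₃(t)d₃(t). -/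

import Mathlib

/-- **Lyapunov inequality for master–slave Lorenz synchronization under the cancellation
control** (Section 5.2, control (lo:eq4)): with `u₁ = (ρ + σ − 2√((1−λ)σ) − z₂) e₁` and
`u₂ = y₂ e₁`, the function `V = ½(e₁² + e₂² + e₃²)` of the synchronization errors
`e₁ = x₁ − x₂`, `e₂ = y₁ − y₂`, `e₃ = z₁ − z₂` is differentiable and satisfies
`V′ ≤ −λσ e₁² − (√((1−λ)σ) e₁ − e₂)² − β e₃² + e₁ d₁ + e₂ d₂ + e₃ d₃`. -/
theorem lorenz_cancellation_lyapunov
    (σ β ρ lam : ℝ) (hσ : 0 < σ) (hβ : 0 < β) (hρ : 0 < ρ)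
    (hlam0 : 0 < lam) (hlam1 : lam < 1)
    (x₁ y₁ z₁ x₂ y₂ z₂ d₁ d₂ d₃ : ℝ → ℝ)
    (hx₁ : ∀ t : ℝ, HasDerivAt x₁ (σ * (y₁ t - x₁ t) + d₁ t) t)
    (hy₁ : ∀ t : ℝ, HasDerivAt y₁ (x₁ t * (ρ - z₁ t) - y₁ t + d₂ t) t)
    (hz₁ : ∀ t : ℝ, HasDerivAt z₁ (x₁ t * y₁ t - β * z₁ t + d₃ t) t)
    (hx₂ : ∀ t : ℝ, HasDerivAt x₂ (σ * (y₂ t - x₂ t)) t)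
    (hy₂ : ∀ t : ℝ, HasDerivAt y₂ (x₂ t * (ρ - z₂ t) - y₂ t +
      (ρ + σ - 2 * Real.sqrt ((1 - lam) * σ) - z₂ t) * (x₁ t - x₂ t)) t)
    (hz₂ : ∀ t : ℝ, HasDerivAt z₂ (x₂ t * y₂ t - β * z₂ t + y₂ t * (x₁ t - x₂ t)) t) :
    Differentiable ℝ
      (fun t => ((x₁ t - x₂ t) ^ 2 + (y₁ t - y₂ t) ^ 2 + (z₁ t - z₂ t) ^ 2) / 2) ∧
    ∀ t : ℝ,
      deriv (fun t => ((x₁ t - x₂ t) ^ 2 + (y₁ t - y₂ t) ^ 2 + (z₁ t - z₂ t) ^ 2) / 2) t ≤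
        -(lam * σ) * (x₁ t - x₂ t) ^ 2
          - (Real.sqrt ((1 - lam) * σ) * (x₁ t - x₂ t) - (y₁ t - y₂ t)) ^ 2
          - β * (z₁ t - z₂ t) ^ 2
          + (x₁ t - x₂ t) * d₁ t + (y₁ t - y₂ t) * d₂ t + (z₁ t - z₂ t) * d₃ t := by

  have key : ∀ t : ℝ, HasDerivAt
      (fun t => ((x₁ t - x₂ t) ^ 2 + (y₁ t - y₂ t) ^ 2 + (z₁ t - z₂ t) ^ 2) / 2)
      ((x₁ t - x₂ t) * ((σ * (y₁ t - x₁ t) + d₁ t) - σ * (y₂ t - x₂ t))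
        + (y₁ t - y₂ t) * ((x₁ t * (ρ - z₁ t) - y₁ t + d₂ t) -
            (x₂ t * (ρ - z₂ t) - y₂ t +
              (ρ + σ - 2 * Real.sqrt ((1 - lam) * σ) - z₂ t) * (x₁ t - x₂ t)))
        + (z₁ t - z₂ t) * ((x₁ t * y₁ t - β * z₁ t + d₃ t) -
            (x₂ t * y₂ t - β * z₂ t + y₂ t * (x₁ t - x₂ t)))) t := by
    intro t
    have h1 := ((hx₁ t).sub (hx₂ t))
    have h2 := ((hy₁ t).sub (hy₂ t))
    have h3 := ((hz₁ t).sub (hz₂ t))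
    have := (((h1.pow 2).add (h2.pow 2)).add (h3.pow 2)).div_const 2
    refine this.congr_deriv ?_
    simp only [Pi.sub_apply]
    push_cast
    ring
  constructor
  · intro t
    exact (key t).differentiableAt
  · intro t
    rw [(key t).deriv]
    have hs : Real.sqrt ((1 - lam) * σ) ^ 2 = (1 - lam) * σ := by
      rw [Real.sq_sqrt]
      nlinarith
    nlinarith [sq_nonneg (Real.sqrt ((1 - lam) * σ) * (x₁ t - x₂ t) - (y₁ t - y₂ t))]
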